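/- Let G = (W ∪ D, E) be the bipartite graph of an (N,K,L,R)-gradient code with N = K, where every vertex in D has degree L and every vertex in W has degree L, and G is connected. For any T ⊆ D with |T| = η ≤ N/4, letting S = |N(T)| be the number of neighbors of T, we have L·S = L·η + |∂(S∪T)| where ∂(S∪T) is the boundary of N(T) ∪ T in G, and consequently S ≥ ((3L − λ₂)/(L + λ₂))·η, where λ₂ is the second largest adjacency eigenvalue of G. -/

import Mathlib

open Finset Matrix

open scoped RealInnerProductSpace

section auxspec
variable {V : Type*} [Fintype V] [DecidableEq V]

set_option linter.unusedSectionVars false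

lemma inner_eq_sum' (y z : EuclideanSpace ℝ V) : ⟪y, z⟫ = ∑ u, y u * z u := by
  simp [PiLp.inner_apply, RCLike.inner_apply, mul_comm]

lemma euclid_T_basis (A : Matrix V V ℝ) (hA : A.IsHermitian) (i : V) :
    Matrix.toEuclideanLin A (hA.eigenvectorBasis i) = hA.eigenvalues i • hA.eigenvectorBasis i := by
  apply (WithLp.equiv 2 (V → ℝ)).injective
  simp only [WithLp.equiv_apply, ofLp_toEuclideanLin_apply, WithLp.ofLp_smul]
  exact hA.mulVec_eigenvectorBasis i

lemma rayleigh_bound (A : Matrix V V ℝ) (hA : A.IsHermitian) (i₀ : V) (lam2 : ℝ)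
    (hub : ∀ i, i ≠ i₀ → hA.eigenvalues i ≤ lam2)
    (x : EuclideanSpace ℝ V) (hx : ⟪hA.eigenvectorBasis i₀, x⟫ = 0) :
    ⟪x, Matrix.toEuclideanLin A x⟫ ≤ lam2 * ⟪x, x⟫ := by
  classical
  set b := hA.eigenvectorBasis with hb
  have hsym : (Matrix.toEuclideanLin A).IsSymmetric := (Matrix.isHermitian_iff_isSymmetric).1 hA
  have key : ∀ i, ⟪b i, Matrix.toEuclideanLin A x⟫ = hA.eigenvalues i * ⟪b i, x⟫ := by
    intro i
    rw [← hsym (b i) x, euclid_T_basis A hA i, inner_smul_left]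
    simp [hb]
  have h1 : ⟪x, Matrix.toEuclideanLin A x⟫ = ∑ i, hA.eigenvalues i * (⟪b i, x⟫ * ⟪b i, x⟫) := by
    rw [← b.sum_inner_mul_inner x (Matrix.toEuclideanLin A x)]
    refine Finset.sum_congr rfl fun i _ => ?_
    rw [key i, real_inner_comm x (b i)]; ring
  have h2 : ⟪x, x⟫ = ∑ i, ⟪b i, x⟫ * ⟪b i, x⟫ := by
    rw [← b.sum_inner_mul_inner x x]
    refine Finset.sum_congr rfl fun i _ => ?_
    rw [real_inner_comm x (b i)]
  rw [h1, h2, Finset.mul_sum]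
  refine Finset.sum_le_sum fun i _ => ?_
  by_cases hi : i = i₀
  · subst hi; rw [hx]; simp
  · exact mul_le_mul_of_nonneg_right (hub i hi) (mul_self_nonneg _)

lemma eigenvalue_of_eigenvector (A : Matrix V V ℝ) (hA : A.IsHermitian) (μ : ℝ)
    (w : EuclideanSpace ℝ V) (hw : w ≠ 0) (hAw : Matrix.toEuclideanLin A w = μ • w) :
    ∃ j, hA.eigenvalues j = μ := by
  classical
  set b := hA.eigenvectorBasis with hb
  have hsym : (Matrix.toEuclideanLin A).IsSymmetric := (Matrix.isHermitian_iff_isSymmetric).1 hA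
  obtain ⟨j, hj⟩ : ∃ j, ⟪b j, w⟫ ≠ 0 := by
    by_contra h
    push_neg at h
    apply hw
    have := b.sum_repr w
    rw [← this]
    refine Finset.sum_eq_zero fun i _ => ?_
    rw [b.repr_apply_apply, h i, zero_smul]
  refine ⟨j, ?_⟩
  have : ⟪b j, Matrix.toEuclideanLin A w⟫ = hA.eigenvalues j * ⟪b j, w⟫ := by
    rw [← hsym (b j) w, euclid_T_basis A hA j, inner_smul_left]; simp [hb]
  rw [hAw, inner_smul_right] at this
  replace this := mul_eq_mul_right_iff.1 this
  rcases this with h | h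
  · exact h.symm
  · exact absurd h hj

lemma sum_eigenvalues_eq_trace' (A : Matrix V V ℝ) (hA : A.IsHermitian) :
    ∑ i, hA.eigenvalues i = Matrix.trace A := by
  have h := hA.spectral_theorem
  have : Matrix.trace A = Matrix.trace (Matrix.diagonal (RCLike.ofReal ∘ hA.eigenvalues) *
      ((star (hA.eigenvectorUnitary : Matrix V V ℝ)) * (hA.eigenvectorUnitary : Matrix V V ℝ))) := by
    conv_lhs => rw [h, Unitary.conjStarAlgAut_apply]
    rw [Matrix.trace_mul_cycle, ← Matrix.mul_assoc, Matrix.trace_mul_comm, Matrix.mul_assoc]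
  rw [Unitary.coe_star_mul_self, Matrix.mul_one] at this
  rw [this, Matrix.trace_diagonal]
  simp

lemma const_of_eigen_L (G : SimpleGraph V) [DecidableRel G.Adj] (L : ℕ)
    (hconn : G.Connected) (hreg : G.IsRegularOfDegree L)
    (v : V → ℝ) (hv : G.adjMatrix ℝ *ᵥ v = (L : ℝ) • v) :
    ∃ c : ℝ, ∀ u, v u = c := by
  classical
  have hne : Nonempty V := hconn.nonempty
  obtain ⟨u₀, -, hmax⟩ := Finset.exists_max_image (univ : Finset V) v ⟨Classical.arbitrary V, mem_univ _⟩
  refine ⟨v u₀, fun u => ?_⟩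
  have step : ∀ a, v a = v u₀ → ∀ b, G.Adj a b → v b = v u₀ := by
    intro a ha b hab
    by_contra hb
    have hblt : v b < v u₀ := lt_of_le_of_ne (hmax b (mem_univ b)) hb
    have hsum : ∑ w ∈ G.neighborFinset a, v w = (L : ℝ) * v a := by
      have := congrFun hv a
      rwa [SimpleGraph.adjMatrix_mulVec_apply, Pi.smul_apply, smul_eq_mul] at this
    have hlt : ∑ w ∈ G.neighborFinset a, v w < ∑ w ∈ G.neighborFinset a, v u₀ := by
      apply Finset.sum_lt_sum (fun w _ => hmax w (mem_univ w))
      exact ⟨b, (SimpleGraph.mem_neighborFinset _ _ _).2 hab, hblt⟩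
    rw [hsum, Finset.sum_const, SimpleGraph.card_neighborFinset_eq_degree, hreg a,
      nsmul_eq_mul, ha] at hlt
    exact lt_irrefl _ hlt
  have hwalk : ∀ {a b : V}, G.Walk a b → v a = v u₀ → v b = v u₀ := by
    intro a b p
    induction p with
    | nil => exact fun h => h
    | cons h p ih => exact fun ha => ih (step _ ha _ h)
  exact (hwalk ((hconn u₀ u).some) rfl)

end auxspec

set_option maxHeartbeats 2000000 in
/-- Proposition 1: adversarial threshold lower bound. For the connected L-regular bipartite
graph G = (W ∪ D, E) of a gradient code with N = K = n, any T ⊆ D with |T| = η ≤ n/4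
satisfies L·|N(T)| = L·η + |∂(N(T) ∪ T)|, and hence |N(T)| ≥ ((3L − λ₂)/(L + λ₂))·η. -/
theorem adversarial_threshold_lower_bound (n L : ℕ)
    (G : SimpleGraph (Fin n ⊕ Fin n)) [DecidableRel G.Adj]
    (hbipW : ∀ w w' : Fin n, ¬ G.Adj (Sum.inl w) (Sum.inl w'))
    (hbipD : ∀ d d' : Fin n, ¬ G.Adj (Sum.inr d) (Sum.inr d'))
    (hconn : G.Connected) (hreg : G.IsRegularOfDegree L)
    (hA : (G.adjMatrix ℝ).IsHermitian)
    (i₀ : Fin n ⊕ Fin n) (hi₀ : hA.eigenvalues i₀ = L)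
    (lam2 : ℝ) (hlam2 : lam2 = sSup {x : ℝ | ∃ i, i ≠ i₀ ∧ hA.eigenvalues i = x})
    (T : Finset (Fin n)) (hT : (T.card : ℝ) ≤ (n : ℝ) / 4)
    (NT : Finset (Fin n))
    (hNT : NT = Finset.univ.filter (fun w => ∃ d ∈ T, G.Adj (Sum.inl w) (Sum.inr d)))
    (A : Finset (Fin n ⊕ Fin n)) (hAdef : A = NT.image Sum.inl ∪ T.image Sum.inr)
    (bd : ℕ)
    (hbd : bd = (Finset.univ.filter
        (fun p : (Fin n ⊕ Fin n) × (Fin n ⊕ Fin n) =>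
          G.Adj p.1 p.2 ∧ p.1 ∈ A ∧ p.2 ∉ A)).card) :
    (L : ℝ) * NT.card = (L : ℝ) * T.card + bd ∧
      ((3 * (L : ℝ) - lam2) / ((L : ℝ) + lam2)) * T.card ≤ NT.card := by
  classical
  -- basic positivity
  have hn : 0 < n := by
    rcases hconn.nonempty with ⟨x | x⟩ <;> exact x.pos
  have hL : 0 < L := by
    obtain ⟨p⟩ := hconn (Sum.inl ⟨0, hn⟩) (Sum.inr ⟨0, hn⟩)
    cases p with
    | @cons _ w _ h p =>
      have : 0 < G.degree (Sum.inl ⟨0, hn⟩) := G.degree_pos_iff_exists_adj _ |>.2 ⟨w, h⟩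
      rwa [hreg] at this
  -- edge counting
  set EC : Finset (Fin n ⊕ Fin n) → Finset (Fin n ⊕ Fin n) → ℕ :=
    fun X Y => ∑ u ∈ X, ∑ v ∈ Y, if G.Adj u v then 1 else 0 with hEC
  have hECuniv : ∀ X : Finset (Fin n ⊕ Fin n), EC X Finset.univ = L * X.card := by
    intro X
    have h1 : ∀ u : Fin n ⊕ Fin n, (∑ v : Fin n ⊕ Fin n, if G.Adj u v then 1 else 0) = L := by
      intro u
      have h2 : Finset.univ.filter (fun v => G.Adj u v) = G.neighborFinset u := by
        ext v; simp [SimpleGraph.mem_neighborFinset]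
      simp [Finset.sum_boole, h2, hreg u]
    simp only [hEC, h1, Finset.sum_const, smul_eq_mul, mul_comm]
  have hECsymm : ∀ X Y : Finset (Fin n ⊕ Fin n), EC X Y = EC Y X := by
    intro X Y
    simp only [hEC]
    rw [Finset.sum_comm]
    refine Finset.sum_congr rfl fun v _ => Finset.sum_congr rfl fun u _ => ?_
    simp [G.adj_comm]
  have hECsplit : ∀ X Y : Finset (Fin n ⊕ Fin n), EC X Y + EC X Yᶜ = EC X Finset.univ := by
    intro X Y
    simp only [hEC, ← Finset.sum_add_distrib]
    exact Finset.sum_congr rfl fun u _ => Finset.sum_add_sum_compl Y _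
  have hbd' : bd = EC A Aᶜ := by
    have hpt : ∀ u v : Fin n ⊕ Fin n, (if G.Adj u v ∧ u ∈ A ∧ v ∉ A then (1:ℕ) else 0) =
        (if u ∈ A then if v ∈ Aᶜ then (if G.Adj u v then 1 else 0) else 0 else 0) := by
      intro u v
      by_cases h1 : u ∈ A <;> by_cases h2 : v ∈ A <;> simp [h1, h2]
    have step1 : ∀ u : Fin n ⊕ Fin n, (∑ v : Fin n ⊕ Fin n,
        if u ∈ A then (if v ∈ Aᶜ then (if G.Adj u v then (1:ℕ) else 0) else 0) else 0) =
        if u ∈ A then (∑ v ∈ Aᶜ, if G.Adj u v then 1 else 0) else 0 := by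
      intro u
      split
      · rw [Finset.sum_ite_mem, Finset.univ_inter]
      · simp
    rw [hbd, Finset.card_filter, Fintype.sum_prod_type]
    simp only [hpt, step1, Finset.sum_ite_mem, Finset.univ_inter, hEC]
  set WA := NT.image (Sum.inl : Fin n → Fin n ⊕ Fin n) with hWA
  set DA := T.image (Sum.inr : Fin n → Fin n ⊕ Fin n) with hDA
  have hdisj : Disjoint WA DA := by
    rw [Finset.disjoint_left]
    rintro a ha hb
    obtain ⟨w, -, rfl⟩ := Finset.mem_image.1 ha
    obtain ⟨d, -, h⟩ := Finset.mem_image.1 hb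
    exact Sum.inl_ne_inr h.symm
  have hcardA : A.card = NT.card + T.card := by
    rw [hAdef, Finset.card_union_of_disjoint hdisj,
      Finset.card_image_of_injective _ Sum.inl_injective,
      Finset.card_image_of_injective _ Sum.inr_injective]
  have hECunionL : ∀ Y : Finset (Fin n ⊕ Fin n), EC A Y = EC WA Y + EC DA Y := by
    intro Y
    simp only [hEC, hAdef]
    exact Finset.sum_union hdisj
  have hECunionR : ∀ X : Finset (Fin n ⊕ Fin n), EC X A = EC X WA + EC X DA := by
    intro X
    simp only [hEC, hAdef, ← Finset.sum_add_distrib]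
    exact Finset.sum_congr rfl fun u _ => Finset.sum_union hdisj
  have hDD : EC DA DA = 0 := by
    simp only [hEC]
    refine Finset.sum_eq_zero fun u hu => Finset.sum_eq_zero fun v hv => ?_
    obtain ⟨d, -, rfl⟩ := Finset.mem_image.1 hu
    obtain ⟨d', -, rfl⟩ := Finset.mem_image.1 hv
    simp [hbipD d d']
  have hDAc : EC DA Aᶜ = 0 := by
    simp only [hEC]
    refine Finset.sum_eq_zero fun u hu => Finset.sum_eq_zero fun v hv => ?_
    obtain ⟨d, hd, rfl⟩ := Finset.mem_image.1 hu
    have hvA : v ∉ A := Finset.mem_compl.1 hv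
    rcases v with w | d'
    · have : ¬ G.Adj (Sum.inr d) (Sum.inl w) := by
        intro hadj
        apply hvA
        rw [hAdef]
        refine Finset.mem_union_left _ (Finset.mem_image.2 ⟨w, ?_, rfl⟩)
        rw [hNT]
        exact Finset.mem_filter.2 ⟨Finset.mem_univ w, ⟨d, hd, hadj.symm⟩⟩
      simp [this]
    · simp [hbipD d d']
  have hDAA : EC DA A = L * T.card := by
    have h1 := hECsplit DA A
    rw [hDAc, hECuniv DA, Nat.add_zero, hDA,
      Finset.card_image_of_injective _ Sum.inr_injective] at h1
    exact h1
  have hDAWA : EC DA WA = L * T.card := by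
    have := hECunionR DA
    rw [hDAA, hDD, Nat.add_zero] at this
    exact this.symm
  have hAA : EC A A = 2 * (L * T.card) := by
    have hWAA : EC WA A = L * T.card := by
      have hWW : EC WA WA = 0 := by
        simp only [hEC]
        refine Finset.sum_eq_zero fun u hu => Finset.sum_eq_zero fun v hv => ?_
        obtain ⟨w, -, rfl⟩ := Finset.mem_image.1 hu
        obtain ⟨w', -, rfl⟩ := Finset.mem_image.1 hv
        simp [hbipW w w']
      rw [hECunionR WA, hWW, Nat.zero_add, hECsymm WA DA, hDAWA]
    rw [hECunionL A, hWAA, hDAA]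
    ring
  have hNat : L * NT.card = L * T.card + bd := by
    have hkey := hECsplit A A
    rw [hECuniv A, hAA, ← hbd', hcardA, Nat.mul_add] at hkey
    linarith
  have hP1 : (L : ℝ) * NT.card = (L : ℝ) * T.card + bd := by exact_mod_cast hNat
  refine ⟨hP1, ?_⟩
  set M := G.adjMatrix ℝ with hM
  set LR : ℝ := (L : ℝ) with hLR
  set nR : ℝ := (n : ℝ) with hnR
  set S : ℝ := (NT.card : ℝ) with hS
  set ηR : ℝ := (T.card : ℝ) with hηR
  set bdR : ℝ := (bd : ℝ) with hbdR
  have hη0 : 0 ≤ ηR := Nat.cast_nonneg _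
  have hS0 : 0 ≤ S := Nat.cast_nonneg _
  have hbd0 : 0 ≤ bdR := Nat.cast_nonneg _
  have hLR1 : 1 ≤ LR := by
    have h1 : (1:ℕ) ≤ L := hL
    rw [hLR]; exact_mod_cast h1
  have hSn : S ≤ nR := by
    have h1 := Finset.card_le_univ NT
    rw [Fintype.card_fin] at h1
    rw [hS, hnR]; exact_mod_cast h1
  -- case η = 0
  rcases Nat.eq_zero_or_pos T.card with hT0 | hTpos
  · rw [hηR, hT0]
    simp [hS0]
  -- now η ≥ 1
  have hη1 : 1 ≤ ηR := by
    have h1 : (1:ℕ) ≤ T.card := hTpos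
    rw [hηR]; exact_mod_cast h1
  have hn4 : 4 * ηR ≤ nR := by
    rw [hηR, hnR]
    linarith [hT]
  have hnpos : (0 : ℝ) < nR := by linarith
  have hub : ∀ i, i ≠ i₀ → hA.eigenvalues i ≤ lam2 := by
    intro i hi
    rw [hlam2]
    have hfin : ({x : ℝ | ∃ i, i ≠ i₀ ∧ hA.eigenvalues i = x}).Finite := by
      have : {x : ℝ | ∃ i, i ≠ i₀ ∧ hA.eigenvalues i = x} =
          (fun i => hA.eigenvalues i) '' {i | i ≠ i₀} := by
        ext x; simp [Set.mem_image]
      rw [this]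
      exact Set.Finite.image _ (Set.toFinite _)
    exact le_csSup hfin.bddAbove ⟨i, hi, rfl⟩
  -- constancy of the top eigenvector
  have hEig0 : M *ᵥ ⇑(hA.eigenvectorBasis i₀) = (L : ℝ) • ⇑(hA.eigenvectorBasis i₀) := by
    have := hA.mulVec_eigenvectorBasis i₀
    rwa [hi₀] at this
  obtain ⟨c, hc⟩ := const_of_eigen_L G L hconn hreg _ hEig0
  -- the test vector
  set mA : ℝ := (A.card : ℝ) with hmA
  set aR : ℝ := 2 * nR - mA with haR
  set bR : ℝ := -mA with hbR
  set x' : (Fin n ⊕ Fin n) → ℝ := fun u => if u ∈ A then aR else bR with hx'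
  set x : EuclideanSpace ℝ (Fin n ⊕ Fin n) := (WithLp.equiv 2 ((Fin n ⊕ Fin n) → ℝ)).symm x' with hx
  have hxapp : ∀ u, x u = x' u := fun u => rfl
  have hcard2n : A.card ≤ 2 * n := by
    have h1 := Finset.card_le_univ A
    rwa [Fintype.card_sum, Fintype.card_fin, ← two_mul] at h1
  have hcardc : ((Aᶜ : Finset (Fin n ⊕ Fin n)).card : ℝ) = 2 * nR - mA := by
    rw [Finset.card_compl, Fintype.card_sum, Fintype.card_fin]
    rw [Nat.cast_sub (by omega)]
    push_cast
    ring
  have hsumA : ∀ (p : ℝ), (∑ u ∈ A, p) = mA * p := by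
    intro p; rw [Finset.sum_const, nsmul_eq_mul, hmA]
  have hsumC : ∀ (p : ℝ), (∑ u ∈ Aᶜ, p) = (2 * nR - mA) * p := by
    intro p; rw [Finset.sum_const, nsmul_eq_mul, hcardc]
  have hvalA : ∀ u ∈ A, x' u = aR := fun u hu => if_pos hu
  have hvalC : ∀ u ∈ Aᶜ, x' u = bR := fun u hu => if_neg (Finset.mem_compl.1 hu)
  have hsum0 : (∑ u, x' u) = 0 := by
    rw [← Finset.sum_add_sum_compl A x']
    rw [Finset.sum_congr rfl hvalA, Finset.sum_congr rfl hvalC, hsumA, hsumC, haR, hbR]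
    ring
  have hxorth : ⟪(hA.eigenvectorBasis i₀ : EuclideanSpace ℝ (Fin n ⊕ Fin n)), x⟫ = 0 := by
    rw [inner_eq_sum']
    have : ∀ u, (hA.eigenvectorBasis i₀ : EuclideanSpace ℝ (Fin n ⊕ Fin n)) u * x u = c * x' u := by
      intro u
      have hcu : (hA.eigenvectorBasis i₀ : EuclideanSpace ℝ (Fin n ⊕ Fin n)) u = c := hc u
      rw [hcu, hxapp]
    rw [Finset.sum_congr rfl fun u _ => this u, ← Finset.mul_sum, hsum0, mul_zero]
  have hray := rayleigh_bound M hA i₀ lam2 hub x hxorth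
  -- unfold the quadratic form
  have hcast : ∀ X Y : Finset (Fin n ⊕ Fin n),
      ((EC X Y : ℕ) : ℝ) = ∑ u ∈ X, ∑ v ∈ Y, M u v := by
    intro X Y
    simp only [hEC]
    push_cast
    refine Finset.sum_congr rfl fun u _ => Finset.sum_congr rfl fun v _ => ?_
    simp [hM, SimpleGraph.adjMatrix_apply, apply_ite]
  have hblock : ∀ (X Y : Finset (Fin n ⊕ Fin n)) (p q : ℝ),
      (∀ u ∈ X, x' u = p) → (∀ v ∈ Y, x' v = q) →
      (∑ u ∈ X, ∑ v ∈ Y, x' u * (M u v * x' v)) = p * q * ∑ u ∈ X, ∑ v ∈ Y, M u v := by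
    intro X Y p q hp hq
    rw [Finset.mul_sum]
    refine Finset.sum_congr rfl fun u hu => ?_
    rw [Finset.mul_sum]
    refine Finset.sum_congr rfl fun v hv => ?_
    rw [hp u hu, hq v hv]; ring
  have hsplit2 : ∀ f : (Fin n ⊕ Fin n) → (Fin n ⊕ Fin n) → ℝ,
      (∑ u, ∑ v, f u v) = ((∑ u ∈ A, ∑ v ∈ A, f u v) + (∑ u ∈ A, ∑ v ∈ Aᶜ, f u v)) +
        ((∑ u ∈ Aᶜ, ∑ v ∈ A, f u v) + ∑ u ∈ Aᶜ, ∑ v ∈ Aᶜ, f u v) := by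
    intro f
    rw [← Finset.sum_add_sum_compl A (fun u => ∑ v, f u v)]
    congr 1 <;>
    · rw [← Finset.sum_add_distrib]
      exact Finset.sum_congr rfl fun u _ => (Finset.sum_add_sum_compl A (f u)).symm
  have hinner : ⟪x, Matrix.toEuclideanLin M x⟫ = ∑ u, ∑ v, x' u * (M u v * x' v) := by
    rw [hx, WithLp.equiv_symm_apply, Matrix.toEuclideanLin_apply_piLp_toLp, inner_eq_sum']
    refine Finset.sum_congr rfl fun u _ => ?_
    simp only [PiLp.toLp_apply]
    rw [show (M *ᵥ x') u = ∑ v, M u v * x' v from by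
      simp [Matrix.mulVec, dotProduct]]
    rw [Finset.mul_sum]
  -- EC values over ℝ
  have hECAA : ((EC A A : ℕ) : ℝ) = LR * mA - bdR := by
    have h1 := hECsplit A A
    rw [hECuniv A, ← hbd'] at h1
    have h2 : ((EC A A : ℕ) : ℝ) + bdR = LR * mA := by
      rw [hbdR, hLR, hmA]; exact_mod_cast h1
    linarith
  have hECcc : ((EC Aᶜ Aᶜ : ℕ) : ℝ) = LR * (2 * nR - mA) - bdR := by
    have h1 := hECsplit Aᶜ A
    have h1' : bd + EC Aᶜ Aᶜ = L * (Aᶜ : Finset (Fin n ⊕ Fin n)).card := by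
      rw [hbd', hECsymm A Aᶜ, ← hECuniv Aᶜ]
      exact h1
    have h2 : bdR + ((EC Aᶜ Aᶜ : ℕ) : ℝ) = LR * ((Aᶜ : Finset (Fin n ⊕ Fin n)).card : ℝ) := by
      rw [hbdR, hLR]; exact_mod_cast h1'
    rw [hcardc] at h2
    linarith
  have hbdsym : ((EC Aᶜ A : ℕ) : ℝ) = bdR := by
    rw [hECsymm Aᶜ A, ← hbd']
  have hbdR' : ((EC A Aᶜ : ℕ) : ℝ) = bdR := by rw [← hbd']
  have hQ : ⟪x, Matrix.toEuclideanLin M x⟫ =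
      aR * aR * (LR * mA - bdR) + aR * bR * bdR + (bR * aR * bdR +
        bR * bR * (LR * (2 * nR - mA) - bdR)) := by
    rw [hinner, hsplit2 (fun u v => x' u * (M u v * x' v))]
    rw [hblock A A aR aR hvalA hvalA, hblock A Aᶜ aR bR hvalA hvalC,
      hblock Aᶜ A bR aR hvalC hvalA, hblock Aᶜ Aᶜ bR bR hvalC hvalC]
    rw [← hcast A A, ← hcast A Aᶜ, ← hcast Aᶜ A, ← hcast Aᶜ Aᶜ]
    rw [hECAA, hECcc, hbdsym, hbdR']
  have hxx : ⟪x, x⟫ = aR * aR * mA + bR * bR * (2 * nR - mA) := by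
    rw [inner_eq_sum']
    have h0 : ∀ u, x u * x u = x' u * x' u := fun u => by rw [hxapp]
    calc (∑ u, x u * x u) = ∑ u, x' u * x' u := Finset.sum_congr rfl fun u _ => h0 u
      _ = (∑ u ∈ A, x' u * x' u) + ∑ u ∈ Aᶜ, x' u * x' u :=
          (Finset.sum_add_sum_compl A _).symm
      _ = (∑ u ∈ A, aR * aR) + ∑ u ∈ Aᶜ, bR * bR := by
          congr 1
          · exact Finset.sum_congr rfl fun u hu => by rw [hvalA u hu]
          · exact Finset.sum_congr rfl fun u hu => by rw [hvalC u hu]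
      _ = mA * (aR * aR) + (2 * nR - mA) * (bR * bR) := by rw [hsumA, hsumC]
      _ = aR * aR * mA + bR * bR * (2 * nR - mA) := by ring
  rw [hQ, hxx] at hray
  -- the mixing bound
  have hmA_eq : mA = S + ηR := by
    rw [hmA, hcardA]
    push_cast
    rfl
  have hmix : (LR - lam2) * (mA * (2 * nR - mA)) ≤ 2 * nR * bdR := by
    have h2n : (0 : ℝ) < 2 * nR := by linarith
    have hmul : (2 * nR) * ((LR - lam2) * (mA * (2 * nR - mA))) ≤ (2 * nR) * (2 * nR * bdR) := by
      rw [haR, hbR] at hray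
      linarith [hray]
    exact le_of_mul_le_mul_left hmul h2n
  have hbdval : bdR = LR * S - LR * ηR := by linarith [hP1]
  have hSη : ηR ≤ S := by
    have hLpos : (0:ℝ) < LR := lt_of_lt_of_le one_pos hLR1
    by_contra hcon
    push_neg at hcon
    have : LR * S < LR * ηR := (mul_lt_mul_iff_right₀ hLpos).2 hcon
    linarith
  -- final case analysis
  rcases le_or_gt (LR + lam2) 0 with hden | hden
  · rcases eq_or_lt_of_le hden with heq | hlt
    · rw [heq, div_zero, zero_mul]
      exact hS0
    · have hnum : 0 < 3 * LR - lam2 := by linarith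
      have hneg : (3 * LR - lam2) / (LR + lam2) < 0 := div_neg_of_pos_of_neg hnum hlt
      have := mul_nonpos_of_nonpos_of_nonneg (le_of_lt hneg) hη0
      linarith
  · rw [div_mul_eq_mul_div, div_le_iff₀ hden]
    rcases le_or_gt LR lam2 with hc | hc
    · have e1 : (LR + lam2) * ηR ≤ (LR + lam2) * S :=
        mul_le_mul_of_nonneg_left hSη (le_of_lt hden)
      have e2 : (3 * LR - lam2) * ηR ≤ (LR + lam2) * ηR :=
        mul_le_mul_of_nonneg_right (by linarith) hη0
      linarith
    · rcases le_or_gt mA nR with hm | hm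
      · -- |A| ≤ n : use the mixing bound with m' ≥ n
        have hmA0 : (0:ℝ) ≤ mA := Nat.cast_nonneg _
        have e0 : 0 ≤ (LR - lam2) * mA * (nR - mA) :=
          mul_nonneg (mul_nonneg (by linarith) hmA0) (by linarith)
        have h2 : (LR - lam2) * (mA * nR) ≤ 2 * nR * bdR := by linarith [hmix]
        have h3 : (LR - lam2) * mA ≤ 2 * bdR := by
          have h4 : ((LR - lam2) * mA) * nR ≤ (2 * bdR) * nR := by linarith [h2]
          exact le_of_mul_le_mul_right h4 hnpos
        rw [hmA_eq, hbdval] at h3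
        linarith
      · -- |A| > n : here S ≥ 3η and lam2 ≥ 0
        have hs3 : 3 * ηR ≤ S := by
          rw [hmA_eq] at hm
          linarith
        have hlam0 : 0 ≤ lam2 := by
          -- the vector (1, ..., 1, -1, ..., -1) is an eigenvector with eigenvalue -L
          set w' : (Fin n ⊕ Fin n) → ℝ := Sum.elim (fun _ => 1) (fun _ => -1) with hw'
          have hAw : M *ᵥ w' = (-(L : ℝ)) • w' := by
            funext u
            rw [hM, SimpleGraph.adjMatrix_mulVec_apply]
            rcases u with a | a
            · have hall : ∀ z ∈ G.neighborFinset (Sum.inl a), w' z = -1 := by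
                intro z hz
                have hadj := (SimpleGraph.mem_neighborFinset _ _ _).1 hz
                rcases z with b | b
                · exact absurd hadj (hbipW a b)
                · rfl
              rw [Finset.sum_congr rfl hall, Finset.sum_const,
                SimpleGraph.card_neighborFinset_eq_degree, hreg, nsmul_eq_mul]
              simp [hw']
            · have hall : ∀ z ∈ G.neighborFinset (Sum.inr a), w' z = 1 := by
                intro z hz
                have hadj := (SimpleGraph.mem_neighborFinset _ _ _).1 hz
                rcases z with b | b
                · rfl
                · exact absurd hadj (hbipD a b)
              rw [Finset.sum_congr rfl hall, Finset.sum_const,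
                SimpleGraph.card_neighborFinset_eq_degree, hreg, nsmul_eq_mul]
              simp [hw']
          set xw : EuclideanSpace ℝ (Fin n ⊕ Fin n) :=
            (WithLp.equiv 2 ((Fin n ⊕ Fin n) → ℝ)).symm w' with hxw
          have hne : xw ≠ 0 := by
            intro h0
            have h1 : w' = 0 := by
              have h2 := congrArg (WithLp.equiv 2 ((Fin n ⊕ Fin n) → ℝ)) h0
              simpa [hxw] using h2
            have h3 := congrFun h1 (Sum.inl ⟨0, hn⟩)
            simp [hw'] at h3
          have hteu : Matrix.toEuclideanLin M xw = (-(L : ℝ)) • xw := by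
            rw [hxw, WithLp.equiv_symm_apply, Matrix.toEuclideanLin_apply_piLp_toLp, hAw, WithLp.toLp_smul]
          obtain ⟨j, hj⟩ := eigenvalue_of_eigenvector M hA (-(L : ℝ)) xw hne hteu
          have hjne : j ≠ i₀ := by
            intro h
            rw [h, hi₀] at hj
            linarith [hj, hLR1, hLR.le, hLR.ge]
          -- trace argument
          have htr : ∑ i, hA.eigenvalues i = 0 := by
            rw [sum_eigenvalues_eq_trace']
            simp [hM]
          by_contra hneg
          push_neg at hneg
          have hi0j : i₀ ≠ j := Ne.symm hjne
          have hpairsum : ∑ i ∈ ({i₀, j} : Finset (Fin n ⊕ Fin n)), hA.eigenvalues i = 0 := by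
            rw [Finset.sum_pair hi0j, hi₀, hj, hLR]
            ring
          have hsd := Finset.sum_sdiff (f := hA.eigenvalues)
            (Finset.subset_univ ({i₀, j} : Finset (Fin n ⊕ Fin n)))
          rw [hpairsum, htr, add_zero] at hsd
          have hn4' : 4 ≤ n := by
            have : (4 : ℝ) ≤ nR := by linarith
            rw [hnR] at this
            exact_mod_cast this
          have hcards : 0 < (Finset.univ \ ({i₀, j} : Finset (Fin n ⊕ Fin n))).card := by
            rw [Finset.card_sdiff_of_subset (Finset.subset_univ _), Finset.card_univ,
              Fintype.card_sum, Fintype.card_fin]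
            have h2 : ({i₀, j} : Finset (Fin n ⊕ Fin n)).card ≤ 2 :=
              Finset.card_insert_le _ _ |>.trans (by simp)
            omega
          obtain ⟨i₁, hi₁⟩ := Finset.card_pos.1 hcards
          have hlt : ∑ i ∈ Finset.univ \ ({i₀, j} : Finset (Fin n ⊕ Fin n)), hA.eigenvalues i < 0 := by
            have hall : ∀ i ∈ Finset.univ \ ({i₀, j} : Finset (Fin n ⊕ Fin n)),
                hA.eigenvalues i < 0 := by
              intro i hi
              have hine : i ≠ i₀ := by
                have := (Finset.mem_sdiff.1 hi).2
                simp only [Finset.mem_insert, Finset.mem_singleton] at this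
                push_neg at this
                exact this.1
              exact lt_of_le_of_lt (hub i hine) hneg
            calc (∑ i ∈ Finset.univ \ ({i₀, j} : Finset (Fin n ⊕ Fin n)), hA.eigenvalues i)
                < ∑ i ∈ Finset.univ \ ({i₀, j} : Finset (Fin n ⊕ Fin n)), (0 : ℝ) :=
                  Finset.sum_lt_sum_of_nonempty ⟨i₁, hi₁⟩ hall
              _ = 0 := Finset.sum_const_zero
          rw [hsd] at hlt
          exact lt_irrefl _ hlt
        have e1 : (3 * LR - lam2) * ηR ≤ 3 * LR * ηR :=
          mul_le_mul_of_nonneg_right (by linarith) hη0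
        have e3 : (LR + lam2) * (3 * ηR) ≤ (LR + lam2) * S :=
          mul_le_mul_of_nonneg_left hs3 (le_of_lt hden)
        have e2 : 0 ≤ lam2 * ηR := mul_nonneg hlam0 hη0
        linarith
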